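/- Let λ > 0 and t > 0, and let μ, μ̃ ∈ ℝ^n with all entries positive satisfy ‖(μ̃ − μ)/t‖_∞ ≤ c for some c ≥ 0. Then ‖∇Φ_λ(μ/t − 1) − ∇Φ_λ(μ̃/t − 1)‖₂ ≤ (λ√n + ‖∇Φ_λ(μ̃/t − 1)‖₂)(e^{λc} − 1), where Φ_λ(x) = Σ_i cosh(λ x_i) and ∇Φ_λ(x)_i = λ sinh(λ x_i). -/

import Mathlib

open Finset Real

lemma sinh_diff_le (a b : ℝ) :
    |Real.sinh (a + b) - Real.sinh a| ≤ Real.cosh a * (Real.exp |b| - 1) := by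
  have h1 : Real.sinh (a + b) - Real.sinh a
      = Real.sinh a * (Real.cosh b - 1) + Real.cosh a * Real.sinh b := by
    rw [Real.sinh_add]; ring
  rw [h1]
  have hca : |Real.sinh a| ≤ Real.cosh a := by
    nlinarith [sq_abs (Real.sinh a), Real.cosh_sq a, Real.cosh_pos a,
      abs_nonneg (Real.sinh a)]
  have hcb : (1 : ℝ) ≤ Real.cosh b := Real.one_le_cosh b
  have hcpos : 0 < Real.cosh a := Real.cosh_pos a
  calc |Real.sinh a * (Real.cosh b - 1) + Real.cosh a * Real.sinh b|
      ≤ |Real.sinh a * (Real.cosh b - 1)| + |Real.cosh a * Real.sinh b| := abs_add_le _ _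
    _ = |Real.sinh a| * (Real.cosh b - 1) + Real.cosh a * |Real.sinh b| := by
        rw [abs_mul, abs_mul,
          abs_of_nonneg (show (0:ℝ) ≤ Real.cosh b - 1 by linarith), abs_of_pos hcpos]
    _ ≤ Real.cosh a * (Real.cosh b - 1) + Real.cosh a * |Real.sinh b| :=
        add_le_add (mul_le_mul_of_nonneg_right hca (by linarith)) le_rfl
    _ = Real.cosh a * (Real.cosh |b| + Real.sinh |b| - 1) := by
        rw [Real.abs_sinh, Real.cosh_abs]; ring
    _ = Real.cosh a * (Real.exp |b| - 1) := by rw [Real.cosh_add_sinh]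

lemma sqrt_add_le' (a b : ℝ) (ha : 0 ≤ a) (hb : 0 ≤ b) :
    Real.sqrt (a + b) ≤ Real.sqrt a + Real.sqrt b := by
  have h : a + b ≤ (Real.sqrt a + Real.sqrt b) ^ 2 := by
    nlinarith [Real.sq_sqrt ha, Real.sq_sqrt hb, Real.sqrt_nonneg a, Real.sqrt_nonneg b]
  calc Real.sqrt (a + b) ≤ Real.sqrt ((Real.sqrt a + Real.sqrt b) ^ 2) :=
        Real.sqrt_le_sqrt h
    _ = Real.sqrt a + Real.sqrt b := Real.sqrt_sq (by positivity)

theorem stmt15 (n : ℕ) (lam t c : ℝ) (hlam : 0 < lam) (ht : 0 < t) (hc : 0 ≤ c)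
    (μ μt : Fin n → ℝ) (hμ : ∀ i, 0 < μ i) (hμt : ∀ i, 0 < μt i)
    (h : ∀ i, |(μt i - μ i) / t| ≤ c) :
    Real.sqrt (∑ i,
        (lam * Real.sinh (lam * (μ i / t - 1)) - lam * Real.sinh (lam * (μt i / t - 1))) ^ 2) ≤
      (lam * Real.sqrt n +
          Real.sqrt (∑ i, (lam * Real.sinh (lam * (μt i / t - 1))) ^ 2)) *
        (Real.exp (lam * c) - 1) := by
  set K := Real.exp (lam * c) - 1 with hK
  have hK0 : 0 ≤ K := by
    have : (1 : ℝ) ≤ Real.exp (lam * c) := Real.one_le_exp (by positivity)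
    linarith
  set a : Fin n → ℝ := fun i => lam * (μt i / t - 1) with ha
  -- pointwise bound
  have key : ∀ i, (lam * Real.sinh (lam * (μ i / t - 1)) - lam * Real.sinh (a i)) ^ 2
      ≤ lam ^ 2 * Real.cosh (a i) ^ 2 * K ^ 2 := by
    intro i
    set b : ℝ := lam * ((μ i - μt i) / t) with hb
    have hab : lam * (μ i / t - 1) = a i + b := by rw [ha, hb]; ring
    have hbb : |b| ≤ lam * c := by
      rw [hb, abs_mul, abs_of_pos hlam]
      have := h i
      have : |(μ i - μt i) / t| ≤ c := by
        rwa [show (μ i - μt i) / t = -((μt i - μ i) / t) by ring, abs_neg]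
      exact mul_le_mul_of_nonneg_left this hlam.le
    have hs : |Real.sinh (a i + b) - Real.sinh (a i)| ≤ Real.cosh (a i) * K := by
      refine (sinh_diff_le (a i) b).trans ?_
      have : Real.exp |b| ≤ Real.exp (lam * c) := Real.exp_le_exp.2 hbb
      have hcp : 0 < Real.cosh (a i) := Real.cosh_pos _
      rw [hK]; nlinarith
    have : |lam * Real.sinh (lam * (μ i / t - 1)) - lam * Real.sinh (a i)|
        ≤ lam * (Real.cosh (a i) * K) := by
      rw [hab, show lam * Real.sinh (a i + b) - lam * Real.sinh (a i)
          = lam * (Real.sinh (a i + b) - Real.sinh (a i)) by ring, abs_mul,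
        abs_of_pos hlam]
      exact mul_le_mul_of_nonneg_left hs hlam.le
    calc (lam * Real.sinh (lam * (μ i / t - 1)) - lam * Real.sinh (a i)) ^ 2
        = |lam * Real.sinh (lam * (μ i / t - 1)) - lam * Real.sinh (a i)| ^ 2 := (sq_abs _).symm
      _ ≤ (lam * (Real.cosh (a i) * K)) ^ 2 := by
          have hnn : 0 ≤ lam * (Real.cosh (a i) * K) := by positivity
          exact pow_le_pow_left₀ (abs_nonneg _) this 2
      _ = lam ^ 2 * Real.cosh (a i) ^ 2 * K ^ 2 := by ring
  have hsum : (∑ i, (lam * Real.sinh (lam * (μ i / t - 1)) - lam * Real.sinh (a i)) ^ 2)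
      ≤ ∑ i, lam ^ 2 * Real.cosh (a i) ^ 2 * K ^ 2 :=
    Finset.sum_le_sum fun i _ => key i
  have step1 : Real.sqrt (∑ i,
      (lam * Real.sinh (lam * (μ i / t - 1)) - lam * Real.sinh (a i)) ^ 2)
      ≤ Real.sqrt (∑ i, lam ^ 2 * Real.cosh (a i) ^ 2) * K := by
    refine (Real.sqrt_le_sqrt hsum).trans_eq ?_
    rw [show (∑ i, lam ^ 2 * Real.cosh (a i) ^ 2 * K ^ 2)
        = (∑ i, lam ^ 2 * Real.cosh (a i) ^ 2) * K ^ 2 by rw [← Finset.sum_mul],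
      Real.sqrt_mul (by positivity), Real.sqrt_sq hK0]
  have step2 : Real.sqrt (∑ i, lam ^ 2 * Real.cosh (a i) ^ 2)
      ≤ lam * Real.sqrt n + Real.sqrt (∑ i, (lam * Real.sinh (a i)) ^ 2) := by
    have hc2 : ∀ i, lam ^ 2 * Real.cosh (a i) ^ 2
        = lam ^ 2 + (lam * Real.sinh (a i)) ^ 2 := by
      intro i
      have := Real.cosh_sq (a i)
      nlinarith
    rw [Finset.sum_congr rfl fun i _ => hc2 i, Finset.sum_add_distrib]
    refine (sqrt_add_le' _ _ (by positivity) (by positivity)).trans_eq ?_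
    congr 1
    rw [Finset.sum_const, Finset.card_univ, Fintype.card_fin, nsmul_eq_mul,
      Real.sqrt_mul (by positivity), Real.sqrt_sq hlam.le, mul_comm]
  calc Real.sqrt (∑ i,
        (lam * Real.sinh (lam * (μ i / t - 1)) - lam * Real.sinh (a i)) ^ 2)
      ≤ Real.sqrt (∑ i, lam ^ 2 * Real.cosh (a i) ^ 2) * K := step1
    _ ≤ (lam * Real.sqrt n + Real.sqrt (∑ i, (lam * Real.sinh (a i)) ^ 2)) * K := by
        exact mul_le_mul_of_nonneg_right step2 hK0
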